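/- Let k be a field of characteristic 0, n ≥ 1, and let L = FreeLieAlgebra k (Fin n) be the free Lie algebra on generators x_1, …, x_n. If u ∈ L satisfies ⁅u, x_κ⁆ = 0 for some index κ, then u is a scalar multiple of x_κ, i.e. there exists c ∈ k with u = c • x_κ. (Hence the centralizer of each generator x_κ in L is the line k·x_κ; this is the fact underlying the uniqueness of the presentation of a tangential derivation u = ⟦u_1,…,u_n⟧ with normalized components.) -/

import Mathlib

attribute [local instance 100] LieRing.ofAssociativeRing

namespace CentralizerAux

variable (k : Type) [Field k] {n : ℕ}

open FreeLieAlgebra MonoidAlgebra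

noncomputable def Dl : List (Fin n) → FreeLieAlgebra k (Fin n)
  | [] => 0
  | [i] => of k i
  | i :: j :: t => ⁅of k i, Dl (j :: t)⁆

theorem Dl_cons (i : Fin n) (l : List (Fin n)) (hl : l ≠ []) :
    Dl k (i :: l) = ⁅of k i, Dl k l⁆ := by
  cases l with
  | nil => exact absurd rfl hl
  | cons j t => rfl

theorem Dl_single (i : Fin n) : Dl k [i] = of k i := rfl

noncomputable def theta : MonoidAlgebra k (FreeMonoid (Fin n)) →ₗ[k] FreeLieAlgebra k (Fin n) :=
  (Finsupp.linearCombination k (fun w : FreeMonoid (Fin n) => Dl k w.toList)).comp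
    (MonoidAlgebra.coeffLinearEquiv k).toLinearMap

theorem theta_apply (a : MonoidAlgebra k (FreeMonoid (Fin n))) :
    theta k a = a.coeff.sum fun w c => c • Dl k w.toList :=
  Finsupp.linearCombination_apply _ _

theorem theta_single (w : FreeMonoid (Fin n)) (c : k) :
    theta k (single w c) = c • Dl k w.toList :=
  Finsupp.linearCombination_single _ _ _

noncomputable def phi : FreeLieAlgebra k (Fin n) →ₗ⁅k⁆ MonoidAlgebra k (FreeMonoid (Fin n)) :=
  FreeLieAlgebra.lift k (fun i => single (FreeMonoid.of i) 1)

theorem phi_of (i : Fin n) : phi k (of k i) = single (FreeMonoid.of i) (1 : k) :=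
  FreeLieAlgebra.lift_of_apply _ _

theorem mem_of_forall_of (S : LieSubalgebra k (FreeLieAlgebra k (Fin n)))
    (hS : ∀ i, of k i ∈ S) (u : FreeLieAlgebra k (Fin n)) : u ∈ S := by
  let g : FreeLieAlgebra k (Fin n) →ₗ⁅k⁆ S := FreeLieAlgebra.lift k fun i => ⟨of k i, hS i⟩
  have h : S.incl.comp g = LieHom.id := FreeLieAlgebra.hom_ext (by
    intro i
    simp [g, FreeLieAlgebra.lift_of_apply])
  have h2 := LieHom.congr_fun h u
  simp only [LieHom.comp_apply, LieHom.id_apply] at h2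
  rw [← h2]
  exact (g u).2

/-- span of monomials of positive length (the augmentation ideal). -/
noncomputable def P : Submodule k (MonoidAlgebra k (FreeMonoid (Fin n))) :=
  Submodule.span k {a | ∃ w : FreeMonoid (Fin n), w ≠ 1 ∧ ∃ c : k, a = single w c}

theorem single_mem_P (w : FreeMonoid (Fin n)) (hw : w ≠ 1) (c : k) : single w c ∈ P k :=
  Submodule.subset_span ⟨w, hw, c, rfl⟩

theorem mul_ne_one_left {w w' : FreeMonoid (Fin n)} (hw : w ≠ 1) : w * w' ≠ 1 := by
  intro h
  apply hw
  have := congrArg FreeMonoid.toList h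
  rw [FreeMonoid.toList_mul] at this
  rcases List.append_eq_nil_iff.mp this with ⟨h1, _⟩
  exact FreeMonoid.toList.injective h1

theorem P_mul {a b : MonoidAlgebra k (FreeMonoid (Fin n))} (ha : a ∈ P k) (hb : b ∈ P k) :
    a * b ∈ P k := by
  induction ha using Submodule.span_induction with
  | mem a ha =>
    obtain ⟨w, hw, c, rfl⟩ := ha
    induction hb using Submodule.span_induction with
    | mem b hb =>
      obtain ⟨w', hw', c', rfl⟩ := hb
      rw [single_mul_single]
      exact single_mem_P k _ (mul_ne_one_left hw) _
    | zero => rw [mul_zero]; exact zero_mem _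
    | add x y _ _ hx hy => rw [mul_add]; exact add_mem hx hy
    | smul c x _ hx => rw [mul_smul_comm]; exact Submodule.smul_mem _ _ hx
  | zero => rw [zero_mul]; exact zero_mem _
  | add x y _ _ hx hy => rw [add_mul]; exact add_mem hx hy
  | smul c x _ hx => rw [smul_mul_assoc]; exact Submodule.smul_mem _ _ hx

theorem phi_mem_P (u : FreeLieAlgebra k (Fin n)) : phi k u ∈ P k := by
  let S : LieSubalgebra k (FreeLieAlgebra k (Fin n)) :=
    { Submodule.comap (phi k).toLinearMap (P k) with
      lie_mem' := fun {x y} hx hy => by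
        have : phi k ⁅x, y⁆ ∈ P k := by
          rw [LieHom.map_lie, Ring.lie_def]
          exact sub_mem (P_mul k hx hy) (P_mul k hy hx)
        exact this }
  have : u ∈ S := mem_of_forall_of k S (fun i => by
    show phi k (of k i) ∈ P k
    rw [phi_of]
    exact single_mem_P k _ (FreeMonoid.of_ne_one i) _) u
  exact this


theorem theta_phi_mul (u : FreeLieAlgebra k (Fin n)) :
    ∀ a ∈ P k, theta k (phi k u * a) = ⁅u, theta k a⁆ := by
  let S : LieSubalgebra k (FreeLieAlgebra k (Fin n)) :=
    { carrier := {u | ∀ a ∈ P k, theta k (phi k u * a) = ⁅u, theta k a⁆}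
      zero_mem' := by intro a _; simp
      add_mem' := fun {x y} hx hy => by
        intro a ha
        rw [map_add, add_mul, map_add, hx a ha, hy a ha, add_lie]
      smul_mem' := fun c x hx => by
        intro a ha
        rw [map_smul, smul_mul_assoc, map_smul, hx a ha, smul_lie]
      lie_mem' := fun {x y} hx hy => by
        intro a ha
        rw [LieHom.map_lie, Ring.lie_def, sub_mul, map_sub, mul_assoc, mul_assoc,
          hx _ (P_mul k (phi_mem_P k y) ha), hy _ (P_mul k (phi_mem_P k x) ha),
          hy a ha, hx a ha]
        exact (lie_lie x y (theta k a)).symm }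
  intro a ha
  refine mem_of_forall_of k S (fun i => ?_) u a ha
  intro a ha
  show theta k (phi k (of k i) * a) = ⁅of k i, theta k a⁆
  rw [phi_of]
  induction ha using Submodule.span_induction with
  | mem b hb =>
    obtain ⟨w, hw, c, rfl⟩ := hb
    rw [single_mul_single, one_mul, theta_single, theta_single]
    have htl : (FreeMonoid.of i * w).toList = i :: w.toList := rfl
    rw [htl, Dl_cons k i w.toList (by
      intro hnil
      exact hw (FreeMonoid.toList.injective hnil))]
    exact (lie_smul c _ _).symm
  | zero => simp
  | add x y _ _ hx hy => rw [mul_add, map_add, hx, hy, map_add, lie_add]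
  | smul c x _ hx =>
    rw [mul_smul_comm, map_smul, hx, map_smul]
    exact (lie_smul c _ _).symm

/-- the Euler operator -/
noncomputable def E : Module.End k (FreeLieAlgebra k (Fin n)) :=
  (theta k).comp (phi k).toLinearMap

theorem E_lie (u v : FreeLieAlgebra k (Fin n)) :
    E k ⁅u, v⁆ = ⁅u, E k v⁆ + ⁅E k u, v⁆ := by
  show theta k (phi k ⁅u, v⁆) = _
  rw [LieHom.map_lie, Ring.lie_def, map_sub,
    theta_phi_mul k u _ (phi_mem_P k v), theta_phi_mul k v _ (phi_mem_P k u)]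
  rw [← lie_skew v (theta k (phi k u))]
  show ⁅u, E k v⁆ - -⁅E k u, v⁆ = _
  rw [sub_neg_eq_add]

theorem E_of (i : Fin n) : E k (of k i) = of k i := by
  show theta k (phi k (of k i)) = _
  rw [phi_of, theta_single, one_smul]
  rfl

noncomputable def mag : FreeMagma (Fin n) → FreeLieAlgebra k (Fin n)
  | .of i => of k i
  | .mul a b => ⁅mag a, mag b⁆

def mlen : FreeMagma (Fin n) → ℕ
  | .of _ => 1
  | .mul a b => mlen a + mlen b

theorem mlen_ne_zero : ∀ w : FreeMagma (Fin n), mlen w ≠ 0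
  | .of _ => one_ne_zero
  | .mul a b => by
    have := mlen_ne_zero a
    simp only [mlen]
    omega

theorem E_mag : ∀ w : FreeMagma (Fin n), E k (mag k w) = (mlen w : k) • mag k w
  | .of i => by simp [mag, mlen, E_of]
  | .mul a b => by
    have ha := E_mag a
    have hb := E_mag b
    have h1 : ⁅mag k a, (mlen b : k) • mag k b⁆ = (mlen b : k) • ⁅mag k a, mag k b⁆ :=
      by exact lie_smul (mlen b : k) (mag k a) (mag k b)
    have h2 : ⁅(mlen a : k) • mag k a, mag k b⁆ = (mlen a : k) • ⁅mag k a, mag k b⁆ :=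
      by exact smul_lie (mlen a : k) (mag k a) (mag k b)
    show E k ⁅mag k a, mag k b⁆ = (((mlen a + mlen b : ℕ)) : k) • ⁅mag k a, mag k b⁆
    rw [E_lie, ha, hb, h1, h2, ← add_smul, Nat.cast_add, add_comm ((mlen a : k))]

theorem mem_span_mag (u : FreeLieAlgebra k (Fin n)) :
    u ∈ Submodule.span k (Set.range (mag k (n := n))) := by
  have key : ∀ x ∈ Submodule.span k (Set.range (mag k (n := n))),
      ∀ y ∈ Submodule.span k (Set.range (mag k (n := n))),
      ⁅x, y⁆ ∈ Submodule.span k (Set.range (mag k (n := n))) := by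
    intro x hx
    induction hx using Submodule.span_induction with
    | mem x hx =>
      intro y hy
      induction hy using Submodule.span_induction with
      | mem y hy =>
        obtain ⟨w, rfl⟩ := hx
        obtain ⟨w', rfl⟩ := hy
        exact Submodule.subset_span ⟨.mul w w', rfl⟩
      | zero => rw [lie_zero]; exact zero_mem _
      | add a b _ _ h1 h2 => rw [lie_add]; exact add_mem h1 h2
      | smul c a _ h1 => rw [lie_smul]; exact Submodule.smul_mem _ _ h1
    | zero => intro y hy; rw [zero_lie]; exact zero_mem _
    | add a b _ _ h1 h2 => intro y hy; rw [add_lie]; exact add_mem (h1 y hy) (h2 y hy)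
    | smul c a _ h1 => intro y hy; rw [smul_lie]; exact Submodule.smul_mem _ _ (h1 y hy)
  let S : LieSubalgebra k (FreeLieAlgebra k (Fin n)) :=
    { Submodule.span k (Set.range (mag k (n := n))) with
      lie_mem' := fun {x y} hx hy => key x hx y hy }
  exact mem_of_forall_of k S (fun i => Submodule.subset_span ⟨.of i, rfl⟩) u

theorem E_inj [CharZero k] {v : FreeLieAlgebra k (Fin n)} (hv : E k v = 0) : v = 0 := by
  have h1 : v ∈ Module.End.eigenspace (E k) (0 : k) := by
    rw [Module.End.mem_eigenspace_iff, hv, zero_smul]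
  have h2 : v ∈ ⨆ (μ : k) (_ : μ ≠ (0 : k)), Module.End.eigenspace (E k) μ := by
    apply Submodule.span_le.mpr ?_ (mem_span_mag k v)
    rintro _ ⟨w, rfl⟩
    have hmem : mag k w ∈ Module.End.eigenspace (E k) ((mlen w : k)) :=
      Module.End.mem_eigenspace_iff.mpr (E_mag k w)
    have hne : ((mlen w : ℕ) : k) ≠ 0 := Nat.cast_ne_zero.mpr (mlen_ne_zero w)
    exact Submodule.mem_iSup_of_mem _ (Submodule.mem_iSup_of_mem hne hmem)
  have hdis := (Module.End.eigenspaces_iSupIndep (E k (n := n))) (0 : k)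
  exact (Submodule.disjoint_def.mp hdis) v h1 h2


section Comb

variable {k}

/-- number of leading `κ`'s -/
def leadc (κ : Fin n) : List (Fin n) → ℕ
  | [] => 0
  | i :: l => if i = κ then leadc κ l + 1 else 0

theorem leadc_append (κ : Fin n) : ∀ l : List (Fin n), (∃ i ∈ l, i ≠ κ) → leadc κ (l ++ [κ]) = leadc κ l
  | [], h => by simp at h
  | i :: l, h => by
    by_cases hi : i = κ
    · subst hi
      have hl : ∃ j ∈ l, j ≠ i := by
        obtain ⟨j, hj, hji⟩ := h
        rcases List.mem_cons.mp hj with rfl | hmem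
        · exact absurd rfl hji
        · exact ⟨j, hmem, hji⟩
      simp only [List.cons_append, leadc, if_pos rfl, List.append_eq]
      rw [leadc_append i l hl]
    · simp only [List.cons_append, leadc, if_neg hi]

variable (κ : Fin n) (a' : MonoidAlgebra k (FreeMonoid (Fin n)))

theorem coeff_head_ne
    (hc : single (FreeMonoid.of κ) (1 : k) * a' = a' * single (FreeMonoid.of κ) 1)
    (i : Fin n) (t : List (Fin n)) (hi : i ≠ κ) :
    a'.coeff (FreeMonoid.ofList (i :: t)) = 0 := by
  set w : FreeMonoid (Fin n) := FreeMonoid.ofList (i :: t)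
  have e1 : (a' * single (FreeMonoid.of κ) (1 : k)).coeff (w * FreeMonoid.of κ) = a'.coeff w * 1 :=
    coeff_mul_single_eq_coeff_mul _ fun b _ =>
      ⟨fun hb => mul_right_cancel hb, fun hb => by rw [hb]⟩
  have e2 : (single (FreeMonoid.of κ) (1 : k) * a').coeff (w * FreeMonoid.of κ) = 0 := by
    apply single_mul_apply_of_not_exists_mul
    rintro ⟨d, hd⟩
    have := congrArg FreeMonoid.toList hd
    simp only [FreeMonoid.toList_mul, FreeMonoid.toList_of] at this
    have hlist : i :: (t ++ [κ]) = κ :: FreeMonoid.toList d := by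
      simpa [w] using this
    exact hi (List.cons_eq_cons.mp hlist).1
  rw [hc] at e2
  rw [e2, mul_one] at e1
  exact e1.symm

theorem coeff_shift
    (hc : single (FreeMonoid.of κ) (1 : k) * a' = a' * single (FreeMonoid.of κ) 1)
    (w₀ : FreeMonoid (Fin n)) :
    a'.coeff (FreeMonoid.of κ * w₀) = a'.coeff (w₀ * FreeMonoid.of κ) := by
  have e1 : (single (FreeMonoid.of κ) (1 : k) * a').coeff
      (FreeMonoid.of κ * (w₀ * FreeMonoid.of κ)) = 1 * a'.coeff (w₀ * FreeMonoid.of κ) :=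
    coeff_single_mul_eq_mul_coeff _ fun b _ =>
      ⟨fun hb => mul_left_cancel hb, fun hb => by rw [hb]⟩
  have e2 : (a' * single (FreeMonoid.of κ) (1 : k)).coeff
      (FreeMonoid.of κ * w₀ * FreeMonoid.of κ) = a'.coeff (FreeMonoid.of κ * w₀) * 1 :=
    coeff_mul_single_eq_coeff_mul _ fun b _ =>
      ⟨fun hb => mul_right_cancel hb, fun hb => by rw [hb]⟩
  rw [hc] at e1
  rw [← mul_assoc] at e1
  rw [e1, one_mul, mul_one] at e2
  exact e2.symm

theorem coeff_eq_zero
    (hc : single (FreeMonoid.of κ) (1 : k) * a' = a' * single (FreeMonoid.of κ) 1) :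
    ∀ (p : ℕ) (w : FreeMonoid (Fin n)),
    (∃ i ∈ w.toList, i ≠ κ) → leadc κ w.toList = p → a'.coeff w = 0 := by
  intro p
  induction p with
  | zero =>
    intro w hw hl
    obtain ⟨j, hj, hji⟩ := hw
    rcases hlist : w.toList with _ | ⟨i, t⟩
    · rw [hlist] at hj; simp at hj
    · have hi : i ≠ κ := by
        intro hik
        rw [hlist, leadc, if_pos hik] at hl
        omega
      have : w = FreeMonoid.ofList (i :: t) := FreeMonoid.toList.injective (by simpa using hlist)
      rw [this]
      exact coeff_head_ne κ a' hc i t hi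
  | succ p ih =>
    intro w hw hl
    rcases hlist : w.toList with _ | ⟨i, t⟩
    · rw [hlist] at hl; simp [leadc] at hl
    · have hi : i = κ := by
        by_contra hik
        rw [hlist, leadc, if_neg hik] at hl
        omega
      subst hi
      have hw' : w = FreeMonoid.of i * FreeMonoid.ofList t :=
        FreeMonoid.toList.injective (by simpa using hlist)
      have htne : ∃ j ∈ t, j ≠ i := by
        obtain ⟨j, hj, hji⟩ := hw
        rw [hlist] at hj
        rcases List.mem_cons.mp hj with rfl | hmem
        · exact absurd rfl hji
        · exact ⟨j, hmem, hji⟩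
      have hstep := coeff_shift i a' hc (FreeMonoid.ofList t)
      rw [hw', hstep]
      apply ih (FreeMonoid.ofList t * FreeMonoid.of i) _ _
      · obtain ⟨j, hj, hji⟩ := htne
        exact ⟨j, by
          simp only [FreeMonoid.toList_mul, FreeMonoid.toList_of, FreeMonoid.toList_ofList]
          exact List.mem_append.mpr (Or.inl hj), hji⟩
      · have : FreeMonoid.toList (FreeMonoid.ofList t * FreeMonoid.of i) = t ++ [i] := rfl
        rw [this, leadc_append i t htne]
        rw [hlist, leadc, if_pos rfl] at hl
        omega

end Comb

theorem Dl_kappa (κ : Fin n) :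
    ∀ l : List (Fin n), (∀ i ∈ l, i = κ) → l ≠ [κ] → Dl k l = 0
  | [], _, _ => rfl
  | [i], h, hne => absurd (by rw [h i (by simp)]) hne
  | i :: j :: t, h, _ => by
    rcases t with _ | ⟨j', t'⟩
    · have hi : i = κ := h i (by simp)
      have hj : j = κ := h j (by simp)
      show ⁅of k i, Dl k [j]⁆ = 0
      rw [hi, hj, Dl_single, lie_self]
    · show ⁅of k i, Dl k (j :: j' :: t')⁆ = 0
      rw [Dl_kappa κ (j :: j' :: t') (fun x hx => h x (List.mem_cons_of_mem i hx)) (by simp),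
        lie_zero]

end CentralizerAux

/-- The centralizer of a generator `x_κ` in the free Lie algebra `f_n` is the line
`k · x_κ`: if `⁅u, x_κ⁆ = 0` then `u` is a scalar multiple of `x_κ` (the
uniqueness claim for the normalized presentation of tangential derivations,
Section 1.1 of the paper). -/
theorem centralizer_of_generator (k : Type) [Field k] [CharZero k]
    (n : ℕ) (hn : 1 ≤ n) (κ : Fin n) (u : FreeLieAlgebra k (Fin n))
    (h : ⁅u, FreeLieAlgebra.of k κ⁆ = 0) :
    ∃ c : k, u = c • FreeLieAlgebra.of k κ := by
  classical
  set a' := CentralizerAux.phi k u with ha'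
  have hφ : CentralizerAux.phi k ⁅u, FreeLieAlgebra.of k κ⁆ = 0 := by
    rw [h]; exact (CentralizerAux.phi k).map_zero
  rw [LieHom.map_lie, CentralizerAux.phi_of, Ring.lie_def, sub_eq_zero] at hφ
  have hc : MonoidAlgebra.single (FreeMonoid.of κ) (1 : k) * a' =
      a' * MonoidAlgebra.single (FreeMonoid.of κ) 1 := hφ.symm
  have hsupp : ∀ w : FreeMonoid (Fin n), a'.coeff w ≠ 0 → ∀ i ∈ w.toList, i = κ := by
    intro w hw
    by_contra hcon
    push_neg at hcon
    exact hw (CentralizerAux.coeff_eq_zero κ a' hc (CentralizerAux.leadc κ w.toList) w hcon rfl)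
  have hE : CentralizerAux.E k u = a'.coeff (FreeMonoid.of κ) • FreeLieAlgebra.of k κ := by
    show CentralizerAux.theta k a' = _
    rw [CentralizerAux.theta_apply, Finsupp.sum]
    rw [Finset.sum_eq_single (FreeMonoid.of κ)]
    · rfl
    · intro b hb hbne
      have hall : ∀ i ∈ b.toList, i = κ := hsupp b (Finsupp.mem_support_iff.mp hb)
      have hne : b.toList ≠ [κ] := by
        intro hl
        exact hbne (FreeMonoid.toList.injective hl)
      rw [CentralizerAux.Dl_kappa k κ b.toList hall hne, smul_zero]
    · intro hns
      rw [Finsupp.notMem_support_iff.mp hns, zero_smul]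
  refine ⟨a'.coeff (FreeMonoid.of κ), ?_⟩
  have hv : CentralizerAux.E k (u - a'.coeff (FreeMonoid.of κ) • FreeLieAlgebra.of k κ) = 0 := by
    rw [map_sub, map_smul, CentralizerAux.E_of, hE, sub_self]
  exact sub_eq_zero.mp (CentralizerAux.E_inj k hv)
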